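/- Let $T_1 > 0$, $h_1 > 0$ and $h_0 \in \mathbb{R}$. Then each of the following functions satisfies the differential equation $h\,h'' - (h')^2 = 2 T_1 h^3$ at every point of its domain where it is defined: (a) $h(y) = \frac{1}{T_1 (y+h_0)^2}$ for $y \neq -h_0$; (b) $h(y) = \frac{h_1\left(\tanh^2(\sqrt{h_1}(y+h_0)) - 1\right)}{T_1}$ for all $y$ with $h(y) \neq 0$; (c) $h(y) = \frac{h_1\left(\tan^2(\sqrt{h_1}(y+h_0)) + 1\right)}{T_1}$ for all $y$ such that $\sqrt{h_1}(y+h_0)$ is not an odd multiple of $\pi/2$. -/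

import Mathlib

/-- Solution family (a): `h(y) = 1/(T₁ (y+h₀)²)`. -/
noncomputable def hSolA (T1 h0 : ℝ) : ℝ → ℝ := fun y => 1 / (T1 * (y + h0) ^ 2)

/-- Solution family (b): `h(y) = h₁ (tanh²(√h₁ (y+h₀)) - 1)/T₁`. -/
noncomputable def hSolB (T1 h1 h0 : ℝ) : ℝ → ℝ :=
  fun y => h1 * ((Real.tanh (Real.sqrt h1 * (y + h0))) ^ 2 - 1) / T1

/-- Solution family (c): `h(y) = h₁ (tan²(√h₁ (y+h₀)) + 1)/T₁`. -/
noncomputable def hSolC (T1 h1 h0 : ℝ) : ℝ → ℝ :=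
  fun y => h1 * ((Real.tan (Real.sqrt h1 * (y + h0))) ^ 2 + 1) / T1

lemma hasDerivAt_tanh' (x : ℝ) : HasDerivAt Real.tanh (1 - Real.tanh x ^ 2) x := by
  have hc : Real.cosh x ≠ 0 := (Real.cosh_pos x).ne'
  have h := (Real.hasDerivAt_sinh x).div (Real.hasDerivAt_cosh x) hc
  have he : (fun y => Real.sinh y / Real.cosh y) = Real.tanh := by
    funext y; rw [Real.tanh_eq_sinh_div_cosh]
  rw [show (Real.sinh / Real.cosh) = Real.tanh from he] at h
  refine h.congr_deriv ?_
  have hsq : Real.cosh x ^ 2 - Real.sinh x ^ 2 = 1 := Real.cosh_sq_sub_sinh_sq x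
  rw [Real.tanh_eq_sinh_div_cosh]
  field_simp

lemma hasDerivAt_tan' {x : ℝ} (h : Real.cos x ≠ 0) :
    HasDerivAt Real.tan (1 + Real.tan x ^ 2) x := by
  have ht := Real.hasDerivAt_tan h
  convert ht using 1
  rw [Real.tan_eq_sin_div_cos]
  field_simp
  try nlinarith [Real.sin_sq_add_cos_sq x]

section A

variable (T1 h0 : ℝ)

lemma hA_d1 (hT : T1 ≠ 0) {y : ℝ} (hy : y ≠ -h0) :
    HasDerivAt (hSolA T1 h0) (-2 / (T1 * (y + h0) ^ 3)) y := by
  have hne : y + h0 ≠ 0 := by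
    intro h; apply hy; linarith
  have hg : HasDerivAt (fun y : ℝ => T1 * (y + h0) ^ 2) (T1 * (2 * (y + h0))) y := by
    have := (((hasDerivAt_id y).add_const h0).pow 2).const_mul T1
    simpa using this
  have hgy : T1 * (y + h0) ^ 2 ≠ 0 := by positivity
  have := hg.inv hgy
  have he : (fun y : ℝ => (T1 * (y + h0) ^ 2)⁻¹) = hSolA T1 h0 := by
    funext z; simp [hSolA, one_div]
  rw [show (fun y : ℝ => T1 * (y + h0) ^ 2)⁻¹ = hSolA T1 h0 from he] at this
  refine this.congr_deriv ?_
  field_simp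

lemma hA_d2 (hT : T1 ≠ 0) {y : ℝ} (hy : y ≠ -h0) :
    HasDerivAt (fun y : ℝ => -2 / (T1 * (y + h0) ^ 3)) (6 / (T1 * (y + h0) ^ 4)) y := by
  have hne : y + h0 ≠ 0 := by
    intro h; apply hy; linarith
  have hg : HasDerivAt (fun y : ℝ => T1 * (y + h0) ^ 3) (T1 * (3 * (y + h0) ^ 2)) y := by
    have := (((hasDerivAt_id y).add_const h0).pow 3).const_mul T1
    simpa using this
  have hgy : T1 * (y + h0) ^ 3 ≠ 0 := by
    simp [hT, pow_ne_zero, hne]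
  have := (hg.inv hgy).const_mul (-2 : ℝ)
  have he : (fun y : ℝ => -2 * (T1 * (y + h0) ^ 3)⁻¹) = fun y : ℝ => -2 / (T1 * (y + h0) ^ 3) := by
    funext z; rw [div_eq_mul_inv]
  rw [show (fun y : ℝ => -2 * (fun y : ℝ => T1 * (y + h0) ^ 3)⁻¹ y) = fun y : ℝ => -2 / (T1 * (y + h0) ^ 3) from he] at this
  refine this.congr_deriv ?_
  field_simp
  ring

end A

section B

variable (T1 h1 h0 : ℝ)

lemma hB_d1 (y : ℝ) :
    HasDerivAt (hSolB T1 h1 h0)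
      (2 * h1 * Real.sqrt h1 * Real.tanh (Real.sqrt h1 * (y + h0)) *
        (1 - Real.tanh (Real.sqrt h1 * (y + h0)) ^ 2) / T1) y := by
  set s := Real.sqrt h1
  have hu : HasDerivAt (fun y : ℝ => s * (y + h0)) s y := by
    simpa using ((hasDerivAt_id y).add_const h0).const_mul s
  have ht : HasDerivAt (fun y : ℝ => Real.tanh (s * (y + h0)))
      ((1 - Real.tanh (s * (y + h0)) ^ 2) * s) y :=
    by have := (hasDerivAt_tanh' (s * (y + h0))).comp y hu; exact this
  have := (((ht.pow 2).sub_const 1).const_mul h1).div_const T1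
  have he : (fun y : ℝ => h1 * ((Real.tanh (s * (y + h0))) ^ 2 - 1) / T1) = hSolB T1 h1 h0 := rfl
  rw [show (fun x : ℝ => h1 * (((fun y : ℝ => Real.tanh (s * (y + h0))) ^ 2) x - 1) / T1) = hSolB T1 h1 h0 from he] at this
  refine this.congr_deriv ?_
  simp only [Nat.cast_ofNat, Nat.reduceSub, pow_one]
  ring

lemma hB_d2 (y : ℝ) :
    HasDerivAt (fun y : ℝ =>
        2 * h1 * Real.sqrt h1 * Real.tanh (Real.sqrt h1 * (y + h0)) *
          (1 - Real.tanh (Real.sqrt h1 * (y + h0)) ^ 2) / T1)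
      (2 * h1 * Real.sqrt h1 ^ 2 * (1 - Real.tanh (Real.sqrt h1 * (y + h0)) ^ 2) *
        (1 - 3 * Real.tanh (Real.sqrt h1 * (y + h0)) ^ 2) / T1) y := by
  set s := Real.sqrt h1
  have hu : HasDerivAt (fun y : ℝ => s * (y + h0)) s y := by
    simpa using ((hasDerivAt_id y).add_const h0).const_mul s
  have ht : HasDerivAt (fun y : ℝ => Real.tanh (s * (y + h0)))
      ((1 - Real.tanh (s * (y + h0)) ^ 2) * s) y :=
    by have := (hasDerivAt_tanh' (s * (y + h0))).comp y hu; exact this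
  have h2 : HasDerivAt (fun y : ℝ => (1 : ℝ) - Real.tanh (s * (y + h0)) ^ 2)
      (0 - 2 * Real.tanh (s * (y + h0)) ^ 1 * ((1 - Real.tanh (s * (y + h0)) ^ 2) * s)) y :=
    (hasDerivAt_const y (1 : ℝ)).sub (ht.pow 2)
  have := (((ht.const_mul (2 * h1 * s)).mul h2)).div_const T1
  refine this.congr_deriv ?_
  ring

end B

section C

variable (T1 h1 h0 : ℝ)

lemma hC_d1 {y : ℝ} (hc : Real.cos (Real.sqrt h1 * (y + h0)) ≠ 0) :
    HasDerivAt (hSolC T1 h1 h0)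
      (2 * h1 * Real.sqrt h1 * Real.tan (Real.sqrt h1 * (y + h0)) *
        (1 + Real.tan (Real.sqrt h1 * (y + h0)) ^ 2) / T1) y := by
  set s := Real.sqrt h1
  have hu : HasDerivAt (fun y : ℝ => s * (y + h0)) s y := by
    simpa using ((hasDerivAt_id y).add_const h0).const_mul s
  have ht : HasDerivAt (fun y : ℝ => Real.tan (s * (y + h0)))
      ((1 + Real.tan (s * (y + h0)) ^ 2) * s) y :=
    by have := (hasDerivAt_tan' hc).comp y hu; exact this
  have := (((ht.pow 2).add_const 1).const_mul h1).div_const T1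
  have he : (fun y : ℝ => h1 * ((Real.tan (s * (y + h0))) ^ 2 + 1) / T1) = hSolC T1 h1 h0 := rfl
  rw [show (fun x : ℝ => h1 * (((fun y : ℝ => Real.tan (s * (y + h0))) ^ 2) x + 1) / T1) = hSolC T1 h1 h0 from he] at this
  refine this.congr_deriv ?_
  simp only [Nat.cast_ofNat, Nat.reduceSub, pow_one]
  ring

lemma hC_d2 {y : ℝ} (hc : Real.cos (Real.sqrt h1 * (y + h0)) ≠ 0) :
    HasDerivAt (fun y : ℝ =>
        2 * h1 * Real.sqrt h1 * Real.tan (Real.sqrt h1 * (y + h0)) *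
          (1 + Real.tan (Real.sqrt h1 * (y + h0)) ^ 2) / T1)
      (2 * h1 * Real.sqrt h1 ^ 2 * (1 + Real.tan (Real.sqrt h1 * (y + h0)) ^ 2) *
        (1 + 3 * Real.tan (Real.sqrt h1 * (y + h0)) ^ 2) / T1) y := by
  set s := Real.sqrt h1
  have hu : HasDerivAt (fun y : ℝ => s * (y + h0)) s y := by
    simpa using ((hasDerivAt_id y).add_const h0).const_mul s
  have ht : HasDerivAt (fun y : ℝ => Real.tan (s * (y + h0)))
      ((1 + Real.tan (s * (y + h0)) ^ 2) * s) y :=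
    by have := (hasDerivAt_tan' hc).comp y hu; exact this
  have h2 : HasDerivAt (fun y : ℝ => (1 : ℝ) + Real.tan (s * (y + h0)) ^ 2)
      (0 + 2 * Real.tan (s * (y + h0)) ^ 1 * ((1 + Real.tan (s * (y + h0)) ^ 2) * s)) y :=
    (hasDerivAt_const y (1 : ℝ)).add (ht.pow 2)
  have := (((ht.const_mul (2 * h1 * s)).mul h2)).div_const T1
  refine this.congr_deriv ?_
  ring

end C

/-- The three families of conformal factors solve the Bertotti--Robinson
equation `h h'' - (h')² = 2 T₁ h³` wherever they are defined. -/
theorem bertotti_robinson_solutions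
    (T1 h1 h0 : ℝ) (hT1 : 0 < T1) (hh1 : 0 < h1) :
    (∀ y : ℝ, y ≠ -h0 →
      hSolA T1 h0 y * deriv (deriv (hSolA T1 h0)) y - (deriv (hSolA T1 h0) y) ^ 2
        = 2 * T1 * (hSolA T1 h0 y) ^ 3) ∧
    (∀ y : ℝ, hSolB T1 h1 h0 y ≠ 0 →
      hSolB T1 h1 h0 y * deriv (deriv (hSolB T1 h1 h0)) y - (deriv (hSolB T1 h1 h0) y) ^ 2
        = 2 * T1 * (hSolB T1 h1 h0 y) ^ 3) ∧
    (∀ y : ℝ, (∀ k : ℤ, Real.sqrt h1 * (y + h0) ≠ (2 * k + 1) * (Real.pi / 2)) →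
      hSolC T1 h1 h0 y * deriv (deriv (hSolC T1 h1 h0)) y - (deriv (hSolC T1 h1 h0) y) ^ 2
        = 2 * T1 * (hSolC T1 h1 h0 y) ^ 3) := by
  have hT : T1 ≠ 0 := hT1.ne'
  have hs : Real.sqrt h1 ^ 2 = h1 := Real.sq_sqrt hh1.le
  refine ⟨?_, ?_, ?_⟩
  · -- family A
    intro y hy
    have hne : y + h0 ≠ 0 := by intro h; apply hy; linarith
    have hd1 : deriv (hSolA T1 h0) y = -2 / (T1 * (y + h0) ^ 3) := (hA_d1 T1 h0 hT hy).deriv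
    have heq : deriv (hSolA T1 h0) =ᶠ[nhds y] fun z => -2 / (T1 * (z + h0) ^ 3) := by
      filter_upwards [isOpen_compl_singleton.mem_nhds (Set.mem_compl_singleton_iff.mpr hy : y ∈ ({-h0}ᶜ : Set ℝ))] with z hz
      exact (hA_d1 T1 h0 hT hz).deriv
    have hd2 : deriv (deriv (hSolA T1 h0)) y = 6 / (T1 * (y + h0) ^ 4) := by
      rw [heq.deriv_eq]
      exact (hA_d2 T1 h0 hT hy).deriv
    rw [hd1, hd2]
    simp only [hSolA]
    field_simp
    ring
  · -- family B
    intro y _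
    set s := Real.sqrt h1 with hsdef
    set t := Real.tanh (s * (y + h0)) with htd
    have hd1 : deriv (hSolB T1 h1 h0) y = 2 * h1 * s * t * (1 - t ^ 2) / T1 :=
      (hB_d1 T1 h1 h0 y).deriv
    have heq : deriv (hSolB T1 h1 h0) =
        fun z => 2 * h1 * s * Real.tanh (s * (z + h0)) *
          (1 - Real.tanh (s * (z + h0)) ^ 2) / T1 := by
      funext z; exact (hB_d1 T1 h1 h0 z).deriv
    have hd2 : deriv (deriv (hSolB T1 h1 h0)) y
        = 2 * h1 * s ^ 2 * (1 - t ^ 2) * (1 - 3 * t ^ 2) / T1 := by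
      rw [heq]
      exact (hB_d2 T1 h1 h0 y).deriv
    rw [hd1, hd2]
    simp only [hSolB]
    rw [← hsdef, ← htd]
    clear_value t
    clear hd1 hd2 heq hsdef htd
    clear_value s
    rw [← hs]
    field_simp
    ring
  · -- family C
    intro y hy
    set s := Real.sqrt h1 with hsdef
    have hc : Real.cos (s * (y + h0)) ≠ 0 := by
      rw [Real.cos_ne_zero_iff]
      intro k
      have := hy k
      rw [mul_div_assoc]
      exact this
    set t := Real.tan (s * (y + h0)) with htd
    have hd1 : deriv (hSolC T1 h1 h0) y = 2 * h1 * s * t * (1 + t ^ 2) / T1 :=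
      (hC_d1 T1 h1 h0 hc).deriv
    have hopen : IsOpen {z : ℝ | Real.cos (s * (z + h0)) ≠ 0} := by
      have : Continuous fun z : ℝ => Real.cos (s * (z + h0)) := by continuity
      exact isOpen_compl_singleton.preimage this
    have heq : deriv (hSolC T1 h1 h0) =ᶠ[nhds y] fun z =>
        2 * h1 * s * Real.tan (s * (z + h0)) * (1 + Real.tan (s * (z + h0)) ^ 2) / T1 := by
      filter_upwards [hopen.mem_nhds hc] with z hz
      exact (hC_d1 T1 h1 h0 hz).deriv
    have hd2 : deriv (deriv (hSolC T1 h1 h0)) y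
        = 2 * h1 * s ^ 2 * (1 + t ^ 2) * (1 + 3 * t ^ 2) / T1 := by
      rw [heq.deriv_eq]
      exact (hC_d2 T1 h1 h0 hc).deriv
    rw [hd1, hd2]
    simp only [hSolC]
    rw [← hsdef, ← htd]
    clear_value t
    clear hd1 hd2 heq hc hopen hy hsdef htd
    clear_value s
    rw [← hs]
    field_simp
    ring
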